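/- Suppose that for some constant A the Petrov inequality holds: for all n, all independent centered random variables X₁,…,Xₙ with positive finite total variance Bₙ², all x ∈ ℝ, and all g ∈ 𝒢 with finite E Xₖ² g(Xₖ), one has |P(Sₙ < x Bₙ) − Φ(x)| ≤ A·(Σₖ E Xₖ² g(Xₖ))/((1+|x|)² Bₙ² g((1+|x|)Bₙ)). Then A ≥ (1 + √(q/p))²·|q − Φ(√(q/p))| for every p ∈ (0,1), q = 1−p; in particular A > 1.6153. -/

import Mathlib

open MeasureTheory ProbabilityTheory

/-- The standard normal distribution function. -/
noncomputable def Phi (x : ℝ) : ℝ :=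
  (Real.sqrt (2 * Real.pi))⁻¹ * ∫ t in Set.Iio x, Real.exp (-t ^ 2 / 2)

lemma exp_neg_alt : ∀ (n : ℕ) (u : ℝ), 0 ≤ u →
    0 ≤ (-1 : ℝ)^n * (Real.exp (-u) - ∑ k ∈ Finset.range n, (-u)^k / (k.factorial : ℝ)) := by
  intro n
  induction n with
  | zero => intro u _; simpa using (Real.exp_pos (-u)).le
  | succ n ih =>
    set G : ℝ → ℝ := fun u =>
      (-1:ℝ)^(n+1) * (Real.exp (-u) - ∑ k ∈ Finset.range (n+1), (-u)^k / (k.factorial : ℝ))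
      with hGdef
    have hderiv : ∀ u : ℝ, HasDerivAt G
        ((-1:ℝ)^n * (Real.exp (-u) - ∑ k ∈ Finset.range n, (-u)^k / (k.factorial : ℝ))) u := by
      intro u
      have h1 : HasDerivAt (fun u : ℝ => Real.exp (-u)) (-Real.exp (-u)) u := by
        simpa using (hasDerivAt_neg u).exp
      have h2 : HasDerivAt (fun u : ℝ => ∑ k ∈ Finset.range (n+1), (-u)^k / (k.factorial : ℝ))
          (-(∑ k ∈ Finset.range n, (-u)^k / (k.factorial : ℝ))) u := by
        have hterm : ∀ k ∈ Finset.range (n+1), HasDerivAt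
            (fun u : ℝ => (-u)^k / (k.factorial : ℝ))
            (((k:ℝ) * (-u)^(k-1) * (-1)) / (k.factorial : ℝ)) u := by
          intro k _
          exact (((hasDerivAt_id u).neg.pow k)).div_const _
        have hsum := HasDerivAt.fun_sum hterm
        refine hsum.congr_deriv ?_
        symm
        rw [Finset.sum_range_succ']
        simp only [Nat.cast_zero, zero_mul, zero_div, add_zero, Nat.add_sub_cancel]
        rw [← Finset.sum_neg_distrib]
        apply Finset.sum_congr rfl
        intro k _
        have : ((k+1).factorial : ℝ) = ((k:ℝ)+1) * (k.factorial : ℝ) := by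
          rw [Nat.factorial_succ]; push_cast; ring
        rw [this]
        have hf : (k.factorial : ℝ) ≠ 0 := by positivity
        have hk1 : ((k:ℝ)+1) ≠ 0 := by positivity
        field_simp
        push_cast; ring
      have := (h1.sub h2).const_mul ((-1:ℝ)^(n+1))
      refine this.congr_deriv ?_
      ring
    have hdiff : Differentiable ℝ G := fun u => (hderiv u).differentiableAt
    have hmono : MonotoneOn G (Set.Ici (0:ℝ)) := by
      apply monotoneOn_of_deriv_nonneg (convex_Ici 0) hdiff.continuous.continuousOn
        hdiff.differentiableOn
      intro x hx
      rw [interior_Ici] at hx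
      rw [(hderiv x).deriv]
      exact ih x hx.le
    intro u hu
    have hG0 : G 0 = 0 := by
      have hs : (∑ k ∈ Finset.range (n+1), (-(0:ℝ))^k / (k.factorial : ℝ)) = 1 := by
        rw [Finset.sum_range_succ']
        simp
      simp only [hGdef]
      rw [neg_zero] at hs ⊢
      rw [hs, Real.exp_zero]
      ring
    have := hmono (Set.self_mem_Ici) (Set.mem_Ici.mpr hu) hu
    rw [hG0] at this
    exact this



lemma gauss_fun_eq : (fun t : ℝ => Real.exp (-t ^ 2 / 2)) = fun t => Real.exp (-(1/2) * t ^ 2) := by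
  funext t; ring_nf

lemma gauss_integrable : Integrable (fun t : ℝ => Real.exp (-t ^ 2 / 2)) := by
  rw [gauss_fun_eq]
  exact integrable_exp_neg_mul_sq (by norm_num)

lemma gauss_total : ∫ t : ℝ, Real.exp (-t ^ 2 / 2) = Real.sqrt (2 * Real.pi) := by
  rw [gauss_fun_eq, integral_gaussian]
  congr 1
  rw [div_div_eq_mul_div, div_one, mul_comm]

lemma gauss_Ioi : ∫ t in Set.Ioi (0:ℝ), Real.exp (-t ^ 2 / 2) = Real.sqrt (2 * Real.pi) / 2 := by
  rw [show (fun t : ℝ => Real.exp (-t ^ 2 / 2)) = fun t => Real.exp (-(1/2) * t ^ 2) from gauss_fun_eq]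
  rw [integral_gaussian_Ioi]
  congr 2
  rw [div_div_eq_mul_div, div_one, mul_comm]

lemma gauss_Iic : ∫ t in Set.Iic (0:ℝ), Real.exp (-t ^ 2 / 2) = Real.sqrt (2 * Real.pi) / 2 := by
  have h := integral_add_compl (measurableSet_Iic (a := (0:ℝ))) gauss_integrable
  rw [Set.compl_Iic, gauss_Ioi, gauss_total] at h
  linarith

lemma Phi_eq (x : ℝ) : Phi x = 1/2 +
    (Real.sqrt (2 * Real.pi))⁻¹ * ∫ t in (0:ℝ)..x, Real.exp (-t ^ 2 / 2) := by
  have hsub := intervalIntegral.integral_Iic_sub_Iic (f := fun t : ℝ => Real.exp (-t ^ 2 / 2))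
    (gauss_integrable.integrableOn) (gauss_integrable.integrableOn) (a := 0) (b := x)
  have hpos : (0:ℝ) < Real.sqrt (2 * Real.pi) := Real.sqrt_pos.mpr (by positivity)
  unfold Phi
  rw [← integral_Iic_eq_integral_Iio]
  rw [show (∫ t in Set.Iic x, Real.exp (-t ^ 2 / 2)) =
      (∫ t in (0:ℝ)..x, Real.exp (-t ^ 2 / 2)) + Real.sqrt (2 * Real.pi) / 2 by
    rw [← gauss_Iic, ← hsub]; ring]
  field_simp
  ring



lemma poly_le_exp (t : ℝ) :
    ∑ k ∈ Finset.range 18, (-1/2:ℝ)^k / (k.factorial : ℝ) * (t^2)^k ≤ Real.exp (-t ^ 2 / 2) := by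
  have h := exp_neg_alt 18 (t^2/2) (by positivity)
  have hpow : ((-1:ℝ))^(18:ℕ) = 1 := by norm_num
  rw [hpow, one_mul, sub_nonneg] at h
  calc ∑ k ∈ Finset.range 18, (-1/2:ℝ)^k / (k.factorial : ℝ) * (t^2)^k
      = ∑ k ∈ Finset.range 18, (-(t^2/2))^k / (k.factorial : ℝ) := by
        apply Finset.sum_congr rfl
        intro k _
        rw [show (-(t^2/2)) = (-1/2) * t^2 by ring, mul_pow]
        ring
    _ ≤ Real.exp (-(t^2/2)) := h
    _ = Real.exp (-t^2/2) := by ring_nf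

lemma int_poly (x : ℝ) (hx : 0 ≤ x) :
    (∑ k ∈ Finset.range 18, (-1/2:ℝ)^k / (k.factorial : ℝ) * (x^2)^k / (2*(k:ℝ)+1)) * x ≤
      ∫ t in (0:ℝ)..x, Real.exp (-t ^ 2 / 2) := by
  have hcont : ∀ k : ℕ, Continuous (fun t : ℝ => (-1/2:ℝ)^k / (k.factorial : ℝ) * (t^2)^k) := by
    intro k; fun_prop
  have hmono := intervalIntegral.integral_mono_on (μ := volume) hx
    (f := fun t : ℝ => ∑ k ∈ Finset.range 18, (-1/2:ℝ)^k / (k.factorial : ℝ) * (t^2)^k)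
    (g := fun t : ℝ => Real.exp (-t ^ 2 / 2))
    (by
      apply Continuous.intervalIntegrable
      exact continuous_finset_sum _ (fun k _ => hcont k))
    (by
      apply Continuous.intervalIntegrable
      fun_prop)
    (fun t _ => poly_le_exp t)
  refine le_trans (le_of_eq ?_) hmono
  rw [intervalIntegral.integral_finset_sum (fun k _ => (hcont k).intervalIntegrable _ _)]
  rw [Finset.sum_mul]
  apply Finset.sum_congr rfl
  intro k _
  have : ∀ t : ℝ, (-1/2:ℝ)^k / (k.factorial : ℝ) * (t^2)^k
      = (-1/2:ℝ)^k / (k.factorial : ℝ) * t^(2*k) := by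
    intro t; rw [pow_mul]
  simp only [this]
  rw [intervalIntegral.integral_const_mul, integral_pow]
  have h0 : (0:ℝ)^(2*k+1) = 0 := zero_pow (by omega)
  rw [h0, sub_zero]
  rw [show x^(2*k+1) = (x^2)^k * x by rw [pow_succ, pow_mul]]
  push_cast
  ring

lemma petrov_key (A : ℝ)
    (hA : ∀ (Ω : Type) (_ : MeasurableSpace Ω) (μ : Measure Ω),
      IsProbabilityMeasure μ →
      ∀ (n : ℕ) (X : Fin n → Ω → ℝ),
      iIndepFun X μ →
      (∀ k, Measurable (X k)) →
      (∀ k, Integrable (fun ω => (X k ω) ^ 2) μ) →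
      (∀ k, (∫ ω, X k ω ∂μ) = 0) →
      ∀ Bn : ℝ, 0 < Bn → Bn ^ 2 = (∑ k, ∫ ω, (X k ω) ^ 2 ∂μ) →
      ∀ g : ℝ → ℝ,
        (∀ u, 0 ≤ g u) → (∀ u, g (-u) = g u) → (∀ u, 0 < u → 0 < g u) →
        MonotoneOn g (Set.Ioi (0 : ℝ)) →
        MonotoneOn (fun u => u / g u) (Set.Ioi (0 : ℝ)) →
        (∀ k, Integrable (fun ω => (X k ω) ^ 2 * g (X k ω)) μ) →
      ∀ x : ℝ,
        |(μ {ω | (∑ k, X k ω) < x * Bn}).toReal - Phi x| ≤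
          A * (∑ k, ∫ ω, (X k ω) ^ 2 * g (X k ω) ∂μ) /
            ((1 + |x|) ^ 2 * Bn ^ 2 * g ((1 + |x|) * Bn)))
    (p : ℝ) (hp : p ∈ Set.Ioo (0 : ℝ) 1) :
    A ≥ (1 + Real.sqrt ((1 - p) / p)) ^ 2 *
        |(1 - p) - Phi (Real.sqrt ((1 - p) / p))| := by
  obtain ⟨hp0, hp1⟩ := hp
  have hq0 : 0 < 1 - p := by linarith
  set q : ℝ := 1 - p with hqdef
  set a : ℝ := Real.sqrt (q / p) with hadef
  set b : ℝ := Real.sqrt (p / q) with hbdef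
  have ha0 : 0 < a := Real.sqrt_pos.mpr (by positivity)
  have hb0 : 0 < b := Real.sqrt_pos.mpr (by positivity)
  have ha2 : a ^ 2 = q / p := Real.sq_sqrt (by positivity)
  have hb2 : b ^ 2 = p / q := Real.sq_sqrt (by positivity)
  set μ : Measure Bool :=
    (ENNReal.ofReal p) • Measure.dirac true + (ENNReal.ofReal q) • Measure.dirac false with hμdef
  haveI hμprob : IsProbabilityMeasure μ := by
    constructor
    rw [hμdef]
    simp only [Measure.add_apply, Measure.smul_apply, smul_eq_mul, measure_univ, mul_one]
    rw [← ENNReal.ofReal_add hp0.le hq0.le]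
    rw [show p + q = 1 by rw [hqdef]; ring, ENNReal.ofReal_one]
  have hint : ∀ f : Bool → ℝ, ∫ ω, f ω ∂μ = p * f true + q * f false := by
    intro f
    rw [hμdef]
    haveI h1 : IsFiniteMeasure ((ENNReal.ofReal p) • Measure.dirac (true : Bool)) := by
      constructor
      simp [ENNReal.ofReal_lt_top]
    haveI h2 : IsFiniteMeasure ((ENNReal.ofReal q) • Measure.dirac (false : Bool)) := by
      constructor
      simp [ENNReal.ofReal_lt_top]
    rw [integral_add_measure (Integrable.of_finite) (Integrable.of_finite)]
    rw [integral_smul_measure, integral_smul_measure, integral_dirac, integral_dirac]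
    rw [ENNReal.toReal_ofReal hp0.le, ENNReal.toReal_ofReal hq0.le]
    simp [smul_eq_mul]
  set X : Fin 1 → Bool → ℝ := fun _ ω => if ω then a else -b with hXdef
  have hmeas : ∀ k, Measurable (X k) := fun k => measurable_of_countable _
  have hindep : iIndepFun X μ := by
    rw [iIndepFun_iff_measure_inter_preimage_eq_mul]
    intro s sets hsets
    rcases s.eq_empty_or_nonempty with h | h
    · subst h
      rw [Finset.prod_empty,
        show (⋂ i ∈ (∅ : Finset (Fin 1)), X i ⁻¹' sets i) = Set.univ by simp [Set.iInter_const]]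
      exact measure_univ
    · have hs : s = {0} := Finset.eq_singleton_iff_nonempty_unique_mem.mpr
        ⟨h, fun x _ => Subsingleton.elim x 0⟩
      subst hs; simp
  have hXint : ∀ k, Integrable (fun ω => (X k ω) ^ 2) μ := fun _ => .of_finite
  have hXcen : ∀ k, (∫ ω, X k ω ∂μ) = 0 := by
    intro k
    rw [hint]
    have h1 : p * a = Real.sqrt (p * q) := by
      rw [hadef, ← Real.sqrt_sq hp0.le, ← Real.sqrt_mul (by positivity)]
      congr 1
      field_simp
      ring_nf; rw [Real.sq_sqrt (by positivity)]
    have h2 : q * b = Real.sqrt (p * q) := by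
      rw [hbdef, ← Real.sqrt_sq hq0.le, ← Real.sqrt_mul (by positivity)]
      congr 1
      field_simp
      ring_nf; rw [Real.sq_sqrt (by positivity)]
    rw [show X k true = a from rfl, show X k false = -b from rfl]
    rw [mul_neg, h1, h2]
    ring
  have hsum2 : ∀ k : Fin 1, (∫ ω, (X k ω) ^ 2 ∂μ) = 1 := by
    intro k
    rw [hint]
    rw [show X k true = a from rfl, show X k false = -b from rfl]
    rw [neg_pow, ha2, hb2]
    field_simp
    linarith
  have hBn2 : (1:ℝ) ^ 2 = ∑ k : Fin 1, ∫ ω, (X k ω) ^ 2 ∂μ := by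
    rw [Fin.sum_univ_one, hsum2 0]
    norm_num
  have hgint : ∀ k : Fin 1, Integrable (fun ω => (X k ω) ^ 2 * (1:ℝ)) μ := fun _ => .of_finite
  have h := hA Bool inferInstance μ hμprob 1 X hindep hmeas hXint hXcen 1 one_pos hBn2
    (fun _ => 1) (fun _ => zero_le_one) (fun _ => rfl) (fun _ _ => zero_lt_one)
    (monotoneOn_const)
    (by
      simp only [div_one]
      exact fun u _ v _ huv => huv)
    hgint a
  -- simplify h
  have hset : {ω : Bool | (∑ k, X k ω) < a * 1} = {false} := by
    apply Set.eq_singleton_iff_unique_mem.mpr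
    constructor
    · show (∑ k, X k false) < a * 1
      rw [Fin.sum_univ_one, show X 0 false = -b from rfl, mul_one]
      linarith
    · intro ω hω
      cases ω
      · rfl
      · exfalso
        have hlt : (∑ k, X k true) < a * 1 := hω
        rw [Fin.sum_univ_one, show X 0 true = a from rfl, mul_one] at hlt
        exact lt_irrefl a hlt
  have hμfalse : (μ {(false : Bool)}).toReal = q := by
    rw [hμdef]
    simp only [Measure.add_apply, Measure.smul_apply, smul_eq_mul]
    rw [Measure.dirac_apply' _ (MeasurableSet.singleton false),
        Measure.dirac_apply' _ (MeasurableSet.singleton false)]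
    simp only [Set.indicator_apply, Set.mem_singleton_iff, Bool.true_eq_false, if_false, if_true,
      Pi.one_apply]
    rw [mul_zero, mul_one, zero_add, ENNReal.toReal_ofReal hq0.le]
  have hgsum : (∑ k : Fin 1, ∫ ω, (X k ω) ^ 2 * (1:ℝ) ∂μ) = 1 := by
    rw [Fin.sum_univ_one]
    simp only [mul_one]
    exact hsum2 0
  rw [hset, hμfalse, hgsum, abs_of_nonneg ha0.le] at h
  have hden : (0:ℝ) < (1 + a) ^ 2 := by positivity
  rw [show A * 1 / ((1 + a) ^ 2 * 1 ^ 2 * 1) = A / (1 + a) ^ 2 by ring] at h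
  rw [ge_iff_le, ← le_div_iff₀' hden]
  exact h

/-- If the constant `A` satisfies Petrov's inequality
`|P(Sₙ < xBₙ) − Φ(x)| ≤ A·(Σₖ E Xₖ² g(Xₖ))/((1+|x|)² Bₙ² g((1+|x|)Bₙ))`
for all `n`, all independent centered square-integrable `X₁,…,Xₙ` with `Bₙ > 0`,
all `x ∈ ℝ` and all `g ∈ 𝒢` with finite `E Xₖ² g(Xₖ)`, then
`A ≥ (1 + √(q/p))²·|q − Φ(√(q/p))|` for every `p ∈ (0,1)`, `q = 1 − p`;
in particular `A > 1.6153`. -/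
theorem petrov_const_lower_bound (A : ℝ)
    (hA : ∀ (Ω : Type) (_ : MeasurableSpace Ω) (μ : Measure Ω),
      IsProbabilityMeasure μ →
      ∀ (n : ℕ) (X : Fin n → Ω → ℝ),
      iIndepFun X μ →
      (∀ k, Measurable (X k)) →
      (∀ k, Integrable (fun ω => (X k ω) ^ 2) μ) →
      (∀ k, (∫ ω, X k ω ∂μ) = 0) →
      ∀ Bn : ℝ, 0 < Bn → Bn ^ 2 = (∑ k, ∫ ω, (X k ω) ^ 2 ∂μ) →
      ∀ g : ℝ → ℝ,
        (∀ u, 0 ≤ g u) → (∀ u, g (-u) = g u) → (∀ u, 0 < u → 0 < g u) →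
        MonotoneOn g (Set.Ioi (0 : ℝ)) →
        MonotoneOn (fun u => u / g u) (Set.Ioi (0 : ℝ)) →
        (∀ k, Integrable (fun ω => (X k ω) ^ 2 * g (X k ω)) μ) →
      ∀ x : ℝ,
        |(μ {ω | (∑ k, X k ω) < x * Bn}).toReal - Phi x| ≤
          A * (∑ k, ∫ ω, (X k ω) ^ 2 * g (X k ω) ∂μ) /
            ((1 + |x|) ^ 2 * Bn ^ 2 * g ((1 + |x|) * Bn))) :
    (∀ p : ℝ, p ∈ Set.Ioo (0 : ℝ) 1 →
      A ≥ (1 + Real.sqrt ((1 - p) / p)) ^ 2 *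
        |(1 - p) - Phi (Real.sqrt ((1 - p) / p))|) ∧ A > 1.6153 := by
  refine ⟨fun p hp => petrov_key A hA p hp, ?_⟩
  have hp : ((6250:ℝ)/41631) ∈ Set.Ioo (0:ℝ) 1 := by constructor <;> norm_num
  have h := petrov_key A hA (6250/41631) hp
  rw [show (1 - (6250:ℝ)/41631) / ((6250:ℝ)/41631) = 35381/6250 by norm_num,
      show (1 : ℝ) - 6250/41631 = 35381/41631 by norm_num] at h
  set x : ℝ := Real.sqrt (35381/6250) with hxdef
  have hx0 : 0 ≤ x := Real.sqrt_nonneg _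
  have hx2 : x ^ 2 = 35381/6250 := Real.sq_sqrt (by norm_num)
  have hxlb : (5948193/2500000 : ℝ) ≤ x := by
    rw [hxdef, Real.le_sqrt (by norm_num) (by norm_num)]
    norm_num
  have habs : Phi x - 35381/41631 ≤ |(35381/41631 : ℝ) - Phi x| := by
    rw [abs_sub_comm]; exact le_abs_self _
  have hQ : (517625/1000000 : ℝ) ≤
      ∑ k ∈ Finset.range 18, (-1/2:ℝ)^k / (k.factorial : ℝ) * ((35381:ℝ)/6250)^k / (2*(k:ℝ)+1) := by
    norm_num [Finset.sum_range_succ, Nat.factorial]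
  have hI := int_poly x hx0
  rw [hx2] at hI
  have h2π : (0:ℝ) < 2 * Real.pi := by positivity
  have hcx : (47459711/50000000 : ℝ) ≤ (Real.sqrt (2*Real.pi))⁻¹ * x := by
    rw [hxdef, ← Real.sqrt_inv, ← Real.sqrt_mul (by positivity)]
    rw [Real.le_sqrt (by norm_num) (by positivity)]
    rw [inv_mul_eq_div, le_div_iff₀ h2π]
    nlinarith [Real.pi_lt_d6, Real.pi_pos]
  have hcpos : (0:ℝ) ≤ (Real.sqrt (2*Real.pi))⁻¹ := by positivity
  have hPhi := Phi_eq x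
  have hstep1 : (517625/1000000 : ℝ) * (47459711/50000000) ≤
      (Real.sqrt (2*Real.pi))⁻¹ * ∫ t in (0:ℝ)..x, Real.exp (-t ^ 2 / 2) := by
    calc (517625/1000000 : ℝ) * (47459711/50000000)
        ≤ (∑ k ∈ Finset.range 18, (-1/2:ℝ)^k / (k.factorial : ℝ) * ((35381:ℝ)/6250)^k / (2*(k:ℝ)+1))
            * ((Real.sqrt (2*Real.pi))⁻¹ * x) :=
          mul_le_mul hQ hcx (by norm_num) (le_trans (by norm_num) hQ)
      _ = (Real.sqrt (2*Real.pi))⁻¹ *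
            ((∑ k ∈ Finset.range 18, (-1/2:ℝ)^k / (k.factorial : ℝ) * ((35381:ℝ)/6250)^k / (2*(k:ℝ)+1)) * x) := by
          ring
      _ ≤ (Real.sqrt (2*Real.pi))⁻¹ * ∫ t in (0:ℝ)..x, Real.exp (-t ^ 2 / 2) :=
          mul_le_mul_of_nonneg_left hI hcpos
  have hPhilb : (1/2 : ℝ) + 517625/1000000 * (47459711/50000000) ≤ Phi x := by
    rw [hPhi]; linarith
  show (1.6153 : ℝ) < A
  calc (1.6153:ℝ)
      < ((1:ℝ) + 5948193/2500000)^2 * (1/2 + 517625/1000000 * (47459711/50000000) - 35381/41631) := by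
        norm_num
    _ ≤ (1+x)^2 * (Phi x - 35381/41631) := by
        apply mul_le_mul (by nlinarith) (by linarith) (by norm_num) (by positivity)
    _ ≤ (1+x)^2 * |(35381/41631 : ℝ) - Phi x| :=
        mul_le_mul_of_nonneg_left habs (by positivity)
    _ ≤ A := h
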